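/- Define the measure ω(E) = m(E \ B(0,1)) on ℝⁿ (Lebesgue measure with the unit ball removed). Then ω is not doubling, but ω satisfies the C_p condition for every 1 < p < ∞. -/

import Mathlib

open MeasureTheory ENNReal

structure Cube (n : ℕ) where
  c : Fin n → ℝ
  r : ℝ
  hr : 0 < r

namespace Cube

def set {n : ℕ} (I : Cube n) : Set (Fin n → ℝ) :=
  {x | ∀ i, I.c i - I.r ≤ x i ∧ x i < I.c i + I.r}

noncomputable def side {n : ℕ} (I : Cube n) : ℝ := 2 * I.r

noncomputable def vol {n : ℕ} (I : Cube n) : ℝ := (2 * I.r) ^ n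

def double {n : ℕ} (I : Cube n) : Cube n := ⟨I.c, 2 * I.r, by have := I.hr; linarith⟩

def triple {n : ℕ} (I : Cube n) : Cube n := ⟨I.c, 3 * I.r, by have := I.hr; linarith⟩

end Cube

noncomputable def poisson {n : ℕ} (I : Cube n) (ω : Measure (Fin n → ℝ)) : ℝ≥0∞ :=
  ∫⁻ x, (ENNReal.ofReal (I.side / (I.side + Metric.infDist x I.set) ^ 2)) ^ n ∂ω

noncomputable def maximal {n : ℕ} (μ : Measure (Fin n → ℝ)) (x : Fin n → ℝ) : ℝ≥0∞ :=
  ⨆ (I : Cube n) (_ : x ∈ I.set), μ I.set / ENNReal.ofReal I.vol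

noncomputable def wMass {n : ℕ} (w : (Fin n → ℝ) → ℝ≥0∞) (E : Set (Fin n → ℝ)) : ℝ≥0∞ :=
  ∫⁻ x in E, w x


lemma cube_set_eq {n : ℕ} (I : Cube n) :
    I.set = Set.univ.pi fun i => Set.Ico (I.c i - I.r) (I.c i + I.r) := by
  ext x; simp [Cube.set, Set.mem_pi]

lemma cube_measurable {n : ℕ} (I : Cube n) : MeasurableSet I.set := by
  rw [cube_set_eq]; exact MeasurableSet.univ_pi fun i => measurableSet_Ico

lemma cube_volume {n : ℕ} (I : Cube n) : volume I.set = ENNReal.ofReal I.vol := by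
  rw [cube_set_eq, volume_pi_pi]
  have h : ∀ i : Fin n, volume (Set.Ico (I.c i - I.r) (I.c i + I.r))
      = ENNReal.ofReal (2 * I.r) := by
    intro i; rw [Real.volume_Ico]; ring_nf
  simp only [h, Finset.prod_const, Finset.card_univ, Fintype.card_fin]
  rw [← ENNReal.ofReal_pow (by have := I.hr; linarith)]
  rfl

lemma cube_norm_le {n : ℕ} (I : Cube n) {x : Fin n → ℝ} (hx : x ∈ I.set) :
    ‖x - I.c‖ ≤ I.r := by
  rw [pi_norm_le_iff_of_nonneg I.hr.le]
  intro i
  have h := hx i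
  rw [Pi.sub_apply, Real.norm_eq_abs, abs_le]
  constructor <;> linarith [h.1, h.2]

lemma key_min (n : ℕ) {r t D : ℝ} (hr : 0 < r) (ht : 0 < t) (hD : 0 ≤ D)
    (h : D - r ≤ t) : min (t ^ n) ((2 * r) ^ n) ≤ (4 * r / (r + D)) ^ n * t ^ n := by
  rcases le_or_gt D (3 * r) with h3 | h3
  · calc min (t ^ n) ((2 * r) ^ n) ≤ t ^ n := min_le_left _ _
      _ = 1 * t ^ n := (one_mul _).symm
      _ ≤ (4 * r / (r + D)) ^ n * t ^ n := by
          apply mul_le_mul_of_nonneg_right _ (by positivity)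
          apply one_le_pow₀
          rw [le_div_iff₀ (by linarith)]
          linarith
  · calc min (t ^ n) ((2 * r) ^ n) ≤ (2 * r) ^ n := min_le_right _ _
      _ ≤ (4 * r / (r + D)) ^ n * t ^ n := by
          rw [← mul_pow]
          apply pow_le_pow_left₀ (by linarith)
          rw [div_mul_eq_mul_div, le_div_iff₀ (by linarith)]
          nlinarith

lemma maximal_le {n : ℕ} (I : Cube n) (x : Fin n → ℝ) :
    maximal (volume.restrict I.set) x
      ≤ ENNReal.ofReal ((4 * I.r / (I.r + ‖x - I.c‖)) ^ n) := by
  refine iSup₂_le fun J hxJ => ?_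
  have hD0 : (0:ℝ) ≤ ‖x - I.c‖ := norm_nonneg _
  rw [Measure.restrict_apply (cube_measurable J)]
  apply ENNReal.div_le_of_le_mul
  rcases Set.eq_empty_or_nonempty (J.set ∩ I.set) with he | ⟨z, hzJ, hzI⟩
  · rw [he]; simp
  · have hJb : ‖x - z‖ ≤ 2 * J.r := by
      calc ‖x - z‖ ≤ ‖x - J.c‖ + ‖J.c - z‖ := by
            have := norm_add_le (x - J.c) (J.c - z); simpa using this
        _ ≤ J.r + J.r := add_le_add (cube_norm_le J hxJ)
            (by rw [norm_sub_rev]; exact cube_norm_le J hzJ)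
        _ = 2 * J.r := by ring
    have hDle : ‖x - I.c‖ - I.r ≤ 2 * J.r := by
      have h1 : ‖x - I.c‖ ≤ ‖x - z‖ + ‖z - I.c‖ := by
        have := norm_add_le (x - z) (z - I.c); simpa using this
      have h2 := cube_norm_le I hzI
      linarith
    have hv1 : volume (J.set ∩ I.set) ≤ ENNReal.ofReal ((2 * J.r) ^ n) := by
      calc volume (J.set ∩ I.set) ≤ volume J.set := measure_mono Set.inter_subset_left
        _ = ENNReal.ofReal J.vol := cube_volume J
    have hv2 : volume (J.set ∩ I.set) ≤ ENNReal.ofReal ((2 * I.r) ^ n) := by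
      calc volume (J.set ∩ I.set) ≤ volume I.set := measure_mono Set.inter_subset_right
        _ = ENNReal.ofReal I.vol := cube_volume I
    calc volume (J.set ∩ I.set)
        ≤ ENNReal.ofReal (min ((2 * J.r) ^ n) ((2 * I.r) ^ n)) := by
          rcases min_cases ((2 * J.r) ^ n) ((2 * I.r) ^ n) with ⟨hm, _⟩ | ⟨hm, _⟩ <;>
            rw [hm]
          exacts [hv1, hv2]
      _ ≤ ENNReal.ofReal ((4 * I.r / (I.r + ‖x - I.c‖)) ^ n * (2 * J.r) ^ n) :=
          ENNReal.ofReal_le_ofReal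
            (key_min n I.hr (by have := J.hr; linarith) hD0 hDle)
      _ = ENNReal.ofReal ((4 * I.r / (I.r + ‖x - I.c‖)) ^ n) * ENNReal.ofReal J.vol := by
          rw [← ENNReal.ofReal_mul (by have hIr := I.hr; have h0 : (0:ℝ) ≤ 4 * I.r / (I.r + ‖x - I.c‖) := (by positivity); exact pow_nonneg h0 n)]; rfl

lemma maximal_ge {n : ℕ} (I : Cube n) {x y : Fin n → ℝ} (hy : y ∈ I.set)
    (hxy : ‖x - y‖ ≤ 2 * I.r) :
    ENNReal.ofReal ((1 / 4 : ℝ) ^ n) ≤ maximal (volume.restrict I.set) x := by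
  have hr := I.hr
  set J : Cube n := ⟨x, 4 * I.r, by linarith⟩ with hJ
  have hxJ : x ∈ J.set := fun i => ⟨by simp [hJ, Cube.set]; linarith, by simp [hJ, Cube.set]; linarith⟩
  have hIJ : I.set ⊆ J.set := by
    intro z hz i
    have h1 := hz i
    have h2 : |x i - y i| ≤ 2 * I.r := by
      have := norm_le_pi_norm (x - y) i
      rw [Pi.sub_apply, Real.norm_eq_abs] at this
      linarith
    have h3 := hy i
    rw [abs_le] at h2
    constructor
    · show x i - (4 * I.r) ≤ z i; linarith [h1.1, h3.2, h2.1, h2.2]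
    · show z i < x i + 4 * I.r; linarith [h1.2, h3.1, h2.1, h2.2]
  have hμ : (volume.restrict I.set) J.set = ENNReal.ofReal ((2 * I.r) ^ n) := by
    rw [Measure.restrict_apply (cube_measurable J),
      Set.inter_eq_self_of_subset_right hIJ, cube_volume I]; rfl
  have hle := le_iSup₂ (f := fun (J : Cube n) (_ : x ∈ J.set) =>
    (volume.restrict I.set) J.set / ENNReal.ofReal J.vol) J hxJ
  refine le_trans (le_of_eq ?_) hle
  rw [hμ]
  have hvol : J.vol = (8 * I.r) ^ n := by
    show (2 * (4 * I.r)) ^ n = _; ring_nf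
  rw [hvol, ← ENNReal.ofReal_div_of_pos (by positivity)]
  congr 1
  rw [← div_pow]
  congr 1
  field_simp
  ring

lemma lint_lt_top {n : ℕ} (hn : 0 < n) {p : ℝ} (hp : 1 < p) (I : Cube n)
    (μ : Measure (Fin n → ℝ)) (hμ : μ ≤ volume) :
    (∫⁻ x, (maximal (volume.restrict I.set) x) ^ p ∂μ) < ⊤ := by
  have hr := I.hr
  set K : ℝ := 4 * (1 + I.r + ‖I.c‖) with hK
  have hK0 : 0 < K := by positivity
  set q : ℝ := n * p with hq
  have hq0 : 0 < q := by
    have : (0:ℝ) < n := by exact_mod_cast hn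
    positivity
  have hpt : ∀ x : Fin n → ℝ, (maximal (volume.restrict I.set) x) ^ p
      ≤ ENNReal.ofReal (K ^ q) * ENNReal.ofReal ((1 + ‖x‖) ^ (-q)) := by
    intro x
    have hu : (0:ℝ) < 1 + ‖x‖ := by positivity
    have hdiv : 4 * I.r / (I.r + ‖x - I.c‖) ≤ K / (1 + ‖x‖) := by
      rw [div_le_div_iff₀ (by positivity) hu]
      have h1 : ‖x‖ - ‖I.c‖ ≤ ‖x - I.c‖ := norm_sub_norm_le x I.c
      have h2 : (0:ℝ) ≤ ‖x - I.c‖ := norm_nonneg _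
      have h3 : (0:ℝ) ≤ ‖I.c‖ := norm_nonneg _
      have h4 : (0:ℝ) ≤ ‖x‖ := norm_nonneg _
      nlinarith [mul_nonneg (le_of_lt hr) (sub_nonneg.2 h1)]
    have hb : maximal (volume.restrict I.set) x
        ≤ ENNReal.ofReal ((K / (1 + ‖x‖)) ^ n) := by
      refine (maximal_le I x).trans (ENNReal.ofReal_le_ofReal ?_)
      exact pow_le_pow_left₀ (by positivity) hdiv n
    calc (maximal (volume.restrict I.set) x) ^ p
        ≤ (ENNReal.ofReal ((K / (1 + ‖x‖)) ^ n)) ^ p :=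
          ENNReal.rpow_le_rpow hb (by linarith)
      _ = ENNReal.ofReal (((K / (1 + ‖x‖)) ^ n) ^ p) :=
          ENNReal.ofReal_rpow_of_pos (by positivity)
      _ = ENNReal.ofReal (K ^ q * (1 + ‖x‖) ^ (-q)) := by
          congr 1
          rw [← Real.rpow_natCast (K / (1 + ‖x‖)) n, ← Real.rpow_mul (by positivity),
            Real.div_rpow hK0.le hu.le, Real.rpow_neg hu.le, div_eq_mul_inv]
      _ = ENNReal.ofReal (K ^ q) * ENNReal.ofReal ((1 + ‖x‖) ^ (-q)) :=
          ENNReal.ofReal_mul (by positivity)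
  calc (∫⁻ x, (maximal (volume.restrict I.set) x) ^ p ∂μ)
      ≤ ∫⁻ x, (maximal (volume.restrict I.set) x) ^ p ∂(volume) := lintegral_mono' hμ le_rfl
    _ ≤ ∫⁻ x, ENNReal.ofReal (K ^ q) * ENNReal.ofReal ((1 + ‖x‖) ^ (-q)) ∂(volume) :=
        lintegral_mono hpt
    _ = ENNReal.ofReal (K ^ q) * ∫⁻ x, ENNReal.ofReal ((1 + ‖x‖) ^ (-q)) ∂(volume) :=
        lintegral_const_mul' _ _ ENNReal.ofReal_ne_top
    _ < ⊤ := by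
        apply ENNReal.mul_lt_top ENNReal.ofReal_lt_top
        apply finite_integral_one_add_norm
        rw [Module.finrank_fin_fun]
        have h1 : (0:ℝ) < n := by exact_mod_cast hn
        calc (n:ℝ) = n * 1 := (mul_one _).symm
          _ < n * p := by exact mul_lt_mul_of_pos_left hp h1

-- the C_p lower bound on the integral, in the case the cube meets the complement of the ball
lemma lint_ge {n : ℕ} (hn : 0 < n) {p : ℝ} (hp : 1 < p) (I : Cube n)
    {y : Fin n → ℝ} (hyI : y ∈ I.set) (hy1 : 1 ≤ ‖y‖) :
    ENNReal.ofReal (((1 / 4 : ℝ) ^ n) ^ p * I.vol)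
      ≤ ∫⁻ x, (maximal (volume.restrict I.set) x) ^ p
          ∂(volume.restrict (Metric.ball (0 : Fin n → ℝ) 1)ᶜ) := by
  have hr := I.hr
  obtain ⟨i0, hi0⟩ : ∃ i, 1 ≤ |y i| := by
    by_contra h
    push_neg at h
    have : ‖y‖ < 1 := (pi_norm_lt_iff one_pos).2 fun i => by
      rw [Real.norm_eq_abs]; exact h i
    linarith
  set s : Fin n → Set ℝ := fun i =>
    if i = i0 ∧ y i0 < 0 then Set.Ioc (y i - 2 * I.r) (y i)
    else Set.Ico (y i) (y i + 2 * I.r) with hs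
  set S : Set (Fin n → ℝ) := Set.univ.pi s with hSdef
  have hcoord : ∀ x ∈ S, ∀ i, |x i - y i| ≤ 2 * I.r := by
    intro x hx i
    have h := hx i (Set.mem_univ i)
    rw [hs] at h
    simp only at h
    split_ifs at h with hc
    · rw [Set.mem_Ioc] at h; rw [abs_le]; constructor <;> linarith [h.1, h.2]
    · rw [Set.mem_Ico] at h; rw [abs_le]; constructor <;> linarith [h.1, h.2]
  have hnorm : ∀ x ∈ S, ‖x - y‖ ≤ 2 * I.r := by
    intro x hx
    rw [pi_norm_le_iff_of_nonneg (by linarith)]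
    intro i
    rw [Pi.sub_apply, Real.norm_eq_abs]
    exact hcoord x hx i
  have hone : ∀ x ∈ S, 1 ≤ ‖x‖ := by
    intro x hx
    have h := hx i0 (Set.mem_univ i0)
    rw [hs] at h
    simp only at h
    have habs : |x i0| ≤ ‖x‖ := by
      have := norm_le_pi_norm x i0
      rwa [Real.norm_eq_abs] at this
    split_ifs at h with hc
    · rw [Set.mem_Ioc] at h
      have hy : y i0 ≤ -1 := by
        rcases abs_cases (y i0) with ⟨he, _⟩ | ⟨he, _⟩ <;> [linarith [hc.2]; linarith [hi0, he]]
      have : x i0 ≤ -1 := le_trans h.2 hy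
      calc (1:ℝ) ≤ -(x i0) := by linarith
        _ ≤ |x i0| := neg_le_abs _
        _ ≤ ‖x‖ := habs
    · rw [Set.mem_Ico] at h
      rw [not_and_or] at hc
      rcases hc with hc | hc
      · -- i0 = i0 is true, so this case means contradiction? no: hc : ¬(i0 = i0)
        exact absurd trivial hc
      · push_neg at hc
        have hy : 1 ≤ y i0 := by
          rcases abs_cases (y i0) with ⟨he, _⟩ | ⟨he, _⟩ <;> linarith [hi0]
        calc (1:ℝ) ≤ y i0 := hy
          _ ≤ x i0 := h.1
          _ ≤ |x i0| := le_abs_self _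
          _ ≤ ‖x‖ := habs
  have hSball : S ⊆ (Metric.ball (0 : Fin n → ℝ) 1)ᶜ := by
    intro x hx hmem
    rw [Metric.mem_ball, dist_zero_right] at hmem
    exact absurd hmem (not_lt.2 (hone x hx))
  have hSmeas : MeasurableSet S := by
    apply MeasurableSet.univ_pi
    intro i
    rw [hs]
    simp only
    split_ifs
    · exact measurableSet_Ioc
    · exact measurableSet_Ico
  have hSvol : volume S = ENNReal.ofReal ((2 * I.r) ^ n) := by
    rw [hSdef, volume_pi_pi]
    have h : ∀ i : Fin n, volume (s i) = ENNReal.ofReal (2 * I.r) := by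
      intro i
      rw [hs]
      simp only
      split_ifs
      · rw [Real.volume_Ioc]; ring_nf
      · rw [Real.volume_Ico]; ring_nf
    simp only [h, Finset.prod_const, Finset.card_univ, Fintype.card_fin]
    rw [← ENNReal.ofReal_pow (by linarith)]
  have hωS : (volume.restrict (Metric.ball (0 : Fin n → ℝ) 1)ᶜ) S
      = ENNReal.ofReal ((2 * I.r) ^ n) := by
    rw [Measure.restrict_apply hSmeas, Set.inter_eq_self_of_subset_left hSball, hSvol]
  have hp0 : (0:ℝ) ≤ p := by linarith
  calc ENNReal.ofReal (((1 / 4 : ℝ) ^ n) ^ p * I.vol)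
      = ENNReal.ofReal (((1 / 4 : ℝ) ^ n) ^ p) * ENNReal.ofReal ((2 * I.r) ^ n) := by
        rw [← ENNReal.ofReal_mul (by positivity)]; rfl
    _ = ∫⁻ _ in S, ENNReal.ofReal (((1 / 4 : ℝ) ^ n) ^ p)
          ∂(volume.restrict (Metric.ball (0 : Fin n → ℝ) 1)ᶜ) := by
        rw [setLIntegral_const, hωS]
    _ ≤ ∫⁻ x in S, (maximal (volume.restrict I.set) x) ^ p
          ∂(volume.restrict (Metric.ball (0 : Fin n → ℝ) 1)ᶜ) := by
        apply setLIntegral_mono' hSmeas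
        intro x hx
        rw [← ENNReal.ofReal_rpow_of_pos (by positivity)]
        exact ENNReal.rpow_le_rpow (maximal_ge I hyI (hnorm x hx)) hp0
    _ ≤ ∫⁻ x, (maximal (volume.restrict I.set) x) ^ p
          ∂(volume.restrict (Metric.ball (0 : Fin n → ℝ) 1)ᶜ) :=
        setLIntegral_le_lintegral _ _

/-- The measure `ω(E) = m(E \ B(0,1))` on `ℝⁿ` (Lebesgue measure with the
unit ball removed) is not doubling, but satisfies the `C_p` condition for every
`1 < p < ∞`. -/
theorem stmt_19 (n : ℕ) (hn : 0 < n) :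
    let ω : Measure (Fin n → ℝ) := volume.restrict (Metric.ball (0 : Fin n → ℝ) 1)ᶜ
    (¬ ∃ K : ℝ, 0 < K ∧ ∀ I : Cube n, ω I.double.set ≤ ENNReal.ofReal K * ω I.set) ∧
    (∀ p : ℝ, 1 < p → ∃ C > (0:ℝ), ∃ ε > (0:ℝ), ∀ I : Cube n,
      (∫⁻ x, (maximal (volume.restrict I.set) x) ^ p ∂ω) < ⊤ ∧
      ∀ E : Set (Fin n → ℝ), E ⊆ I.set → IsCompact E →
        ω E ≤ ENNReal.ofReal (C * ((volume E).toReal / I.vol) ^ ε) *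
          ∫⁻ x, (maximal (volume.restrict I.set) x) ^ p ∂ω) := by
  intro ω
  have hω : ω = volume.restrict (Metric.ball (0 : Fin n → ℝ) 1)ᶜ := rfl
  constructor
  · -- not doubling
    rintro ⟨K, hK, hA⟩
    set I : Cube n := ⟨fun _ => 0, 9/10, by norm_num⟩ with hI
    have hIball : I.set ⊆ Metric.ball (0 : Fin n → ℝ) 1 := by
      intro x hx
      rw [Metric.mem_ball, dist_zero_right]
      rw [pi_norm_lt_iff one_pos]
      intro i
      have h : (0:ℝ) - 9/10 ≤ x i ∧ x i < 0 + 9/10 := hx i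
      rw [Real.norm_eq_abs, abs_lt]
      constructor <;> [linarith [h.1]; linarith [h.2]]
    have h1 : ω I.set = 0 := by
      rw [hω, Measure.restrict_apply (cube_measurable I)]
      have : I.set ∩ (Metric.ball (0 : Fin n → ℝ) 1)ᶜ = ∅ := by
        rw [Set.eq_empty_iff_forall_notMem]
        rintro x ⟨hx1, hx2⟩
        exact hx2 (hIball hx1)
      rw [this, measure_empty]
    have h2 : ω I.double.set = 0 := by
      have := hA I
      rw [h1, mul_zero] at this
      exact le_zero_iff.1 this
    -- construct a subset of the double with positive ω-measure
    set i0 : Fin n := ⟨0, hn⟩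
    set t : Fin n → Set ℝ := fun i =>
      if i = i0 then Set.Ico (1:ℝ) (9/5) else Set.Ico (0:ℝ) (9/5) with ht
    set S : Set (Fin n → ℝ) := Set.univ.pi t with hSdef
    have hS1 : S ⊆ I.double.set := by
      intro x hx i
      have h := hx i (Set.mem_univ i)
      rw [ht] at h
      simp only at h
      refine ⟨show (0:ℝ) - 2 * (9/10) ≤ x i from ?_, show x i < 0 + 2 * (9/10) from ?_⟩ <;>
        split_ifs at h with hc <;> rw [Set.mem_Ico] at h <;>
        [linarith [h.1]; linarith [h.1]; linarith [h.2]; linarith [h.2]]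
    have hS2 : S ⊆ (Metric.ball (0 : Fin n → ℝ) 1)ᶜ := by
      intro x hx hmem
      rw [Metric.mem_ball, dist_zero_right] at hmem
      have h' := hx i0 (Set.mem_univ i0)
      rw [ht] at h'
      simp only at h'
      have h : x i0 ∈ Set.Ico (1:ℝ) (9/5) := by
        split_ifs at h' with hc
        · exact h'
        · simp at hc
      rw [Set.mem_Ico] at h
      have habs : |x i0| ≤ ‖x‖ := by
        have := norm_le_pi_norm x i0
        rwa [Real.norm_eq_abs] at this
      have : (1:ℝ) ≤ ‖x‖ := le_trans (le_trans h.1 (le_abs_self _)) habs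
      linarith
    have hSvol : volume S ≠ 0 := by
      rw [hSdef, volume_pi_pi]
      rw [Finset.prod_ne_zero_iff]
      intro i _
      rw [ht]
      simp only
      split_ifs
      · rw [Real.volume_Ico]
        exact (ENNReal.ofReal_pos.2 (by norm_num)).ne'
      · rw [Real.volume_Ico]
        exact (ENNReal.ofReal_pos.2 (by norm_num)).ne'
    have hωS : ω S ≠ 0 := by
      rw [hω, Measure.restrict_apply₀]
      · rw [Set.inter_eq_self_of_subset_left hS2]
        exact hSvol
      · apply MeasurableSet.nullMeasurableSet
        apply MeasurableSet.univ_pi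
        intro i
        rw [ht]
        simp only
        split_ifs <;> exact measurableSet_Ico
    exact hωS (le_zero_iff.1 (le_trans (measure_mono hS1) (le_of_eq h2)))
  · -- C_p condition
    intro p hp
    refine ⟨(4:ℝ) ^ ((n:ℝ) * p), Real.rpow_pos_of_pos (by norm_num) _, 1, one_pos, fun I => ?_⟩
    have hr := I.hr
    constructor
    · exact lint_lt_top hn hp I ω (hω ▸ Measure.restrict_le_self)
    · intro E hEI hE
      by_cases hcap : ∃ y ∈ I.set, 1 ≤ ‖y‖
      · obtain ⟨y, hyI, hy1⟩ := hcap
        have hInt := lint_ge hn hp I hyI hy1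
        rw [← hω] at hInt
        have hEfin : volume E ≠ ⊤ := hE.measure_lt_top.ne
        set v : ℝ := (volume E).toReal with hv
        have hv0 : 0 ≤ v := ENNReal.toReal_nonneg
        have hV : (0:ℝ) < I.vol := by
          show (0:ℝ) < (2 * I.r) ^ n; positivity
        set C : ℝ := (4:ℝ) ^ ((n:ℝ) * p) with hC
        set κ : ℝ := ((1 / 4 : ℝ) ^ n) ^ p with hκ
        have hκ0 : 0 < κ := by positivity
        have hCκ : C * κ = 1 := by
          have h14 : ((1:ℝ) / 4) ^ n = (4:ℝ) ^ (-(n:ℝ)) := by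
            rw [Real.rpow_neg (by norm_num), Real.rpow_natCast, one_div, inv_pow]
          rw [hκ, h14, ← Real.rpow_mul (by norm_num), hC, ← Real.rpow_add (by norm_num)]
          rw [show -(n:ℝ) * p = -((n:ℝ) * p) by ring, add_neg_cancel, Real.rpow_zero]
        have hreal : (C * (v / I.vol)) * (κ * I.vol) = v := by
          have : (C * (v / I.vol)) * (κ * I.vol) = (C * κ) * v * (I.vol / I.vol) := by
            ring
          rw [this, hCκ, div_self hV.ne', one_mul, mul_one]
        calc ω E ≤ volume E := hω ▸ Measure.restrict_apply_le _ _
          _ = ENNReal.ofReal v := (ENNReal.ofReal_toReal hEfin).symm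
          _ = ENNReal.ofReal ((C * (v / I.vol)) * (κ * I.vol)) := by rw [hreal]
          _ = ENNReal.ofReal (C * (v / I.vol)) * ENNReal.ofReal (κ * I.vol) := by
              rw [ENNReal.ofReal_mul (by positivity)]
          _ ≤ ENNReal.ofReal (C * (v / I.vol)) *
                ∫⁻ x, (maximal (volume.restrict I.set) x) ^ p ∂ω := by
              exact mul_le_mul_right hInt _
          _ = ENNReal.ofReal (C * ((volume E).toReal / I.vol) ^ (1:ℝ)) *
                ∫⁻ x, (maximal (volume.restrict I.set) x) ^ p ∂ω := by
              rw [Real.rpow_one, hv]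
      · push_neg at hcap
        have hE0 : ω E = 0 := by
          have h1 : ω I.set = 0 := by
            rw [hω, Measure.restrict_apply (cube_measurable I)]
            have : I.set ∩ (Metric.ball (0 : Fin n → ℝ) 1)ᶜ = ∅ := by
              rw [Set.eq_empty_iff_forall_notMem]
              rintro x ⟨hx1, hx2⟩
              rw [Set.mem_compl_iff, Metric.mem_ball, dist_zero_right] at hx2
              exact hx2 (hcap x hx1)
            rw [this, measure_empty]
          exact le_zero_iff.1 (le_trans (measure_mono hEI) (le_of_eq h1))
        rw [hE0]
        exact zero_le
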